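/- The function u(x,t) = 2·(∂²/∂x²) log(1 + exp(√c·(x − δ − c·t))) is a solution of the Korteweg–de Vries equation ∂u/∂t = −∂³u/∂x³ − 6u·∂u/∂x for all (x,t) ∈ ℝ². -/

import Mathlib

private lemma kdv_pos (z : ℝ) : (0:ℝ) < 1 + Real.exp z := by positivity

private lemma kdv_exp_deriv (s b y : ℝ) :
    HasDerivAt (fun z : ℝ => Real.exp (s * (z - b))) (s * Real.exp (s * (y - b))) y := by
  have h : HasDerivAt (fun z : ℝ => s * (z - b)) s y := by
    simpa using ((hasDerivAt_id y).sub_const b).const_mul s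
  simpa [mul_comm] using h.exp

private lemma kdv_d1 {E : ℝ → ℝ} {e' : ℝ} {y : ℝ} (hE : HasDerivAt E e' y)
    (h : (0:ℝ) < 1 + E y) (C : ℝ) :
    HasDerivAt (fun z => C * E z / (1 + E z) ^ 2)
      (C * e' * (1 - E y) / (1 + E y) ^ 3) y := by
  have hne : (1:ℝ) + E y ≠ 0 := ne_of_gt h
  have hden := ((hasDerivAt_const y (1:ℝ)).add hE).pow 2
  have := (hE.const_mul C).div hden (pow_ne_zero 2 hne)
  refine this.congr_deriv ?_
  simp only [Pi.add_apply, Pi.pow_apply, Pi.sub_apply, Pi.mul_apply]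
  field_simp
  ring

private lemma kdv_d2 {E : ℝ → ℝ} {e' : ℝ} {y : ℝ} (hE : HasDerivAt E e' y)
    (h : (0:ℝ) < 1 + E y) (C : ℝ) :
    HasDerivAt (fun z => C * (E z * (1 - E z)) / (1 + E z) ^ 3)
      (C * e' * (1 - 4 * E y + E y ^ 2) / (1 + E y) ^ 4) y := by
  have hne : (1:ℝ) + E y ≠ 0 := ne_of_gt h
  have hden := ((hasDerivAt_const y (1:ℝ)).add hE).pow 3
  have hnum := (hE.mul ((hasDerivAt_const y (1:ℝ)).sub hE)).const_mul C
  have := hnum.div hden (pow_ne_zero 3 hne)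
  refine this.congr_deriv ?_
  simp only [Pi.add_apply, Pi.pow_apply, Pi.sub_apply, Pi.mul_apply]
  field_simp
  ring

private lemma kdv_d3 {E : ℝ → ℝ} {e' : ℝ} {y : ℝ} (hE : HasDerivAt E e' y)
    (h : (0:ℝ) < 1 + E y) (C : ℝ) :
    HasDerivAt (fun z => C * (E z * (1 - 4 * E z + E z ^ 2)) / (1 + E z) ^ 4)
      (C * e' * (1 - 11 * E y + 11 * E y ^ 2 - E y ^ 3) / (1 + E y) ^ 5) y := by
  have hne : (1:ℝ) + E y ≠ 0 := ne_of_gt h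
  have hden := ((hasDerivAt_const y (1:ℝ)).add hE).pow 4
  have hpoly : HasDerivAt (fun z => (1:ℝ) - 4 * E z + E z ^ 2)
      (0 - 4 * e' + 2 * E y ^ 1 * e') y :=
    ((hasDerivAt_const y (1:ℝ)).sub (hE.const_mul 4)).add (hE.pow 2)
  have hnum := (hE.mul hpoly).const_mul C
  have := hnum.div hden (pow_ne_zero 4 hne)
  refine this.congr_deriv ?_
  simp only [Pi.add_apply, Pi.pow_apply, Pi.sub_apply, Pi.mul_apply]
  field_simp
  ring

private lemma kdv_iter2 (s b x : ℝ) :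
    iteratedDeriv 2 (fun z : ℝ => Real.log (1 + Real.exp (s * (z - b)))) x =
      s ^ 2 * Real.exp (s * (x - b)) / (1 + Real.exp (s * (x - b))) ^ 2 := by
  have hne : ∀ y : ℝ, (1:ℝ) + Real.exp (s * (y - b)) ≠ 0 := fun y => ne_of_gt (kdv_pos _)
  have h1 : ∀ y : ℝ, HasDerivAt (fun z : ℝ => Real.log (1 + Real.exp (s * (z - b))))
      (s * Real.exp (s * (y - b)) / (1 + Real.exp (s * (y - b)))) y := by
    intro y
    have := ((hasDerivAt_const y (1:ℝ)).add (kdv_exp_deriv s b y)).log (hne y)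
    simpa using this
  have hd1 : deriv (fun z : ℝ => Real.log (1 + Real.exp (s * (z - b)))) =
      fun y => s * Real.exp (s * (y - b)) / (1 + Real.exp (s * (y - b))) :=
    funext fun y => (h1 y).deriv
  rw [show (2:ℕ) = 1 + 1 from rfl, iteratedDeriv_succ, iteratedDeriv_one, hd1]
  have h2 : HasDerivAt (fun y : ℝ => s * Real.exp (s * (y - b)) / (1 + Real.exp (s * (y - b))))
      (s ^ 2 * Real.exp (s * (x - b)) / (1 + Real.exp (s * (x - b))) ^ 2) x := by
    have hnum := (kdv_exp_deriv s b x).const_mul s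
    have hden := (hasDerivAt_const x (1:ℝ)).add (kdv_exp_deriv s b x)
    have := hnum.div hden (hne x)
    refine this.congr_deriv ?_
    simp only [Pi.add_apply, Pi.pow_apply, Pi.sub_apply, Pi.mul_apply]
    field_simp
    ring
  exact h2.deriv

/-- The 1-soliton `u(x,t) = 2 (∂²/∂x²) log(1 + exp(√c (x − δ − c t)))` solves the KdV
equation `∂u/∂t = −∂³u/∂x³ − 6 u ∂u/∂x` on all of `ℝ²`. -/
theorem one_soliton_solves_KdV (c δ : ℝ) (hc : 0 < c) (u : ℝ → ℝ → ℝ)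
    (hu : u = fun x t : ℝ =>
      2 * iteratedDeriv 2 (fun y : ℝ => Real.log (1 + Real.exp (Real.sqrt c * (y - δ - c * t)))) x) :
    ∀ x t : ℝ,
      deriv (fun s : ℝ => u x s) t =
        -(iteratedDeriv 3 (fun y : ℝ => u y t) x)
          - 6 * u x t * deriv (fun y : ℝ => u y t) x := by
  have hsq : Real.sqrt c ^ 2 = c := Real.sq_sqrt hc.le
  have hss : Real.sqrt c * Real.sqrt c = c := Real.mul_self_sqrt hc.le
  have hu2 : u = fun x t : ℝ =>
      2 * c * Real.exp (Real.sqrt c * (x - δ - c * t)) /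
        (1 + Real.exp (Real.sqrt c * (x - δ - c * t))) ^ 2 := by
    rw [hu]
    funext x t
    rw [show (fun y : ℝ => Real.log (1 + Real.exp (Real.sqrt c * (y - δ - c * t)))) =
        (fun y : ℝ => Real.log (1 + Real.exp (Real.sqrt c * (y - (δ + c * t))))) from by
      funext z; rw [sub_sub]]
    rw [kdv_iter2, hsq, ← sub_sub]
    ring
  intro x t
  rw [hu2]
  beta_reduce
  -- spatial exponential derivative
  have hEx : ∀ y : ℝ, HasDerivAt (fun z : ℝ => Real.exp (Real.sqrt c * (z - δ - c * t)))
      (Real.sqrt c * Real.exp (Real.sqrt c * (y - δ - c * t))) y := by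
    intro y
    have h : HasDerivAt (fun z : ℝ => Real.sqrt c * (z - δ - c * t)) (Real.sqrt c) y := by
      simpa using (((hasDerivAt_id y).sub_const δ).sub_const (c * t)).const_mul (Real.sqrt c)
    simpa [mul_comm] using h.exp
  -- temporal exponential derivative
  have hEt : HasDerivAt (fun τ : ℝ => Real.exp (Real.sqrt c * (x - δ - c * τ)))
      (-(Real.sqrt c * c) * Real.exp (Real.sqrt c * (x - δ - c * t))) t := by
    have h : HasDerivAt (fun τ : ℝ => Real.sqrt c * (x - δ - c * τ)) (-(Real.sqrt c * c)) t := by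
      have h0 : HasDerivAt (fun τ : ℝ => c * τ) c t := by
        simpa using (hasDerivAt_id t).const_mul c
      have := ((hasDerivAt_const t (x - δ)).sub h0).const_mul (Real.sqrt c)
      refine this.congr_deriv ?_
      ring
    simpa [mul_comm] using h.exp
  -- first spatial derivative (function level)
  have hD1 : deriv (fun y : ℝ => 2 * c * Real.exp (Real.sqrt c * (y - δ - c * t)) /
        (1 + Real.exp (Real.sqrt c * (y - δ - c * t))) ^ 2) =
      fun y : ℝ => 2 * c * Real.sqrt c *
        (Real.exp (Real.sqrt c * (y - δ - c * t)) *
          (1 - Real.exp (Real.sqrt c * (y - δ - c * t)))) /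
        (1 + Real.exp (Real.sqrt c * (y - δ - c * t))) ^ 3 := by
    funext y
    have h := kdv_d1 (hEx y) (kdv_pos _) (2 * c)
    beta_reduce at h
    rw [h.deriv]
    ring
  -- second spatial derivative (function level)
  have hD2 : deriv (fun y : ℝ => 2 * c * Real.sqrt c *
        (Real.exp (Real.sqrt c * (y - δ - c * t)) *
          (1 - Real.exp (Real.sqrt c * (y - δ - c * t)))) /
        (1 + Real.exp (Real.sqrt c * (y - δ - c * t))) ^ 3) =
      fun y : ℝ => 2 * c * c *
        (Real.exp (Real.sqrt c * (y - δ - c * t)) *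
          (1 - 4 * Real.exp (Real.sqrt c * (y - δ - c * t)) +
            Real.exp (Real.sqrt c * (y - δ - c * t)) ^ 2)) /
        (1 + Real.exp (Real.sqrt c * (y - δ - c * t))) ^ 4 := by
    funext y
    have h := kdv_d2 (hEx y) (kdv_pos _) (2 * c * Real.sqrt c)
    beta_reduce at h
    have key : 2 * c * Real.sqrt c * (Real.sqrt c * Real.exp (Real.sqrt c * (y - δ - c * t))) =
        2 * c * c * Real.exp (Real.sqrt c * (y - δ - c * t)) := by
      linear_combination (2 * c * Real.exp (Real.sqrt c * (y - δ - c * t))) * hss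
    rw [h.deriv, key]
    ring
  -- third spatial derivative (at the point x)
  have hD3 := kdv_d3 (hEx x) (kdv_pos _) (2 * c * c)
  beta_reduce at hD3
  -- temporal derivative (at the point t)
  have hDt := kdv_d1 hEt (kdv_pos _) (2 * c)
  beta_reduce at hDt
  rw [show (3:ℕ) = 2 + 1 from rfl, iteratedDeriv_succ, show (2:ℕ) = 1 + 1 from rfl,
    iteratedDeriv_succ, iteratedDeriv_one, hD1, hD2, hD3.deriv, hDt.deriv]
  have hne : (1:ℝ) + Real.exp (Real.sqrt c * (x - δ - c * t)) ≠ 0 := ne_of_gt (kdv_pos _)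
  field_simp
  ring
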